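/- Let G = (V, E) be a finite simple graph, let v ∈ V, and let A be a family of isolated neighborhoods of v (i.e., each S ∈ A contains v, induces a connected subgraph of G, and satisfies η(S) ≤ c for an integer c ≥ 0). Then there exists a cover B ⊆ A of A with |B| ≤ (c+1)!. -/

import Mathlib

/-- The external neighborhood `N(S)` of a set `S` of vertices: vertices not in `S`
that are adjacent to at least one vertex of `S`. Its cardinality is the cut-size `η(S)`. -/
def cutSet {V : Type} (G : SimpleGraph V) (S : Set V) : Set V :=
  {u | u ∉ S ∧ ∃ w ∈ S, G.Adj w u}

namespace IsolatedCover

open SimpleGraph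

variable {V : Type}

/-- connectivity within a vertex set: there is a walk whose support stays in `W`. -/
def ConnIn (G : SimpleGraph V) (W : Set V) (x y : V) : Prop :=
  ∃ p : G.Walk x y, ∀ z ∈ p.support, z ∈ W

lemma ConnIn.mem_left {G : SimpleGraph V} {W : Set V} {x y : V} (h : ConnIn G W x y) : x ∈ W := by
  obtain ⟨p, hp⟩ := h; exact hp x p.start_mem_support

lemma ConnIn.mem_right {G : SimpleGraph V} {W : Set V} {x y : V} (h : ConnIn G W x y) : y ∈ W := by
  obtain ⟨p, hp⟩ := h; exact hp y p.end_mem_support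

lemma ConnIn.refl {G : SimpleGraph V} {W : Set V} {x : V} (hx : x ∈ W) : ConnIn G W x x :=
  ⟨SimpleGraph.Walk.nil, by simp [hx]⟩

lemma ConnIn.symm {G : SimpleGraph V} {W : Set V} {x y : V} (h : ConnIn G W x y) :
    ConnIn G W y x := by
  obtain ⟨p, hp⟩ := h
  exact ⟨p.reverse, fun z hz => hp z (by simpa using hz)⟩

lemma ConnIn.trans {G : SimpleGraph V} {W : Set V} {x y z : V} (h : ConnIn G W x y)
    (h' : ConnIn G W y z) : ConnIn G W x z := by
  obtain ⟨p, hp⟩ := h; obtain ⟨q, hq⟩ := h'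
  refine ⟨p.append q, fun w hw => ?_⟩
  rw [SimpleGraph.Walk.mem_support_append_iff] at hw
  exact hw.elim (hp w) (hq w)

lemma ConnIn.adjExtend {G : SimpleGraph V} {W : Set V} {x y z : V} (h : ConnIn G W x y)
    (ha : G.Adj y z) (hz : z ∈ W) : ConnIn G W x z :=
  h.trans ⟨SimpleGraph.Walk.cons ha SimpleGraph.Walk.nil, by
    intro w hw
    simp only [SimpleGraph.Walk.support_cons, SimpleGraph.Walk.support_nil,
      List.mem_cons, List.mem_singleton] at hw
    rcases hw with rfl | rfl | h'
    · exact h.mem_right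
    · exact hz
    · exact absurd h' List.not_mem_nil⟩

/-- first-exit lemma: a walk inside `W` from outside `Z` into `Z` crosses the boundary. -/
lemma exists_adj_boundary {G : SimpleGraph V} {W Z : Set V} :
    ∀ {x y : V} (p : G.Walk x y), (∀ z ∈ p.support, z ∈ W) → x ∉ Z → y ∈ Z →
    ∃ a b, ConnIn G (W \ Z) x a ∧ G.Adj a b ∧ a ∈ W ∧ a ∉ Z ∧ b ∈ W ∧ b ∈ Z := by
  intro x y p
  induction p with
  | nil => intro _ hx hy; exact absurd hy hx
  | @cons u m y' h q ih =>
    intro hp hx hy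
    have hu : u ∈ W := hp u (by simp [SimpleGraph.Walk.support_cons])
    have hm' : m ∈ W := hp m (by
      rw [SimpleGraph.Walk.support_cons]
      exact List.mem_cons_of_mem _ q.start_mem_support)
    by_cases hm : m ∈ Z
    · exact ⟨u, m, ConnIn.refl (show u ∈ W \ Z from ⟨hu, hx⟩), h, hu, hx, hm', hm⟩
    · obtain ⟨a, b, hc, hab, h1, h2, h3, h4⟩ :=
        ih (fun z hz => hp z (by rw [SimpleGraph.Walk.support_cons]; exact List.mem_cons_of_mem _ hz)) hm hy
      exact ⟨a, b, (ConnIn.adjExtend (ConnIn.refl (show u ∈ W \ Z from ⟨hu, hx⟩)) h ⟨hm', hm⟩).trans hc, hab, h1, h2, h3, h4⟩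

/-- inclusion homomorphism from an induced subgraph. -/
def inclHom (G : SimpleGraph V) (W : Set V) : G.induce W →g G :=
  ⟨Subtype.val, fun {a b} h => h⟩

lemma connIn_of_induce_connected {G : SimpleGraph V} {W : Set V}
    (h : (G.induce W).Connected) {x y : V} (hx : x ∈ W) (hy : y ∈ W) : ConnIn G W x y := by
  obtain ⟨q⟩ := h.preconnected ⟨x, hx⟩ ⟨y, hy⟩
  refine ⟨q.map (inclHom G W), ?_⟩
  intro z hz
  replace hz : z ∈ (q.map (inclHom G W)).support := hz
  rw [SimpleGraph.Walk.support_map] at hz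
  obtain ⟨⟨z', hz'⟩, _, rfl⟩ := List.mem_map.mp hz
  exact hz'

lemma reachable_induce_of_support {G : SimpleGraph V} {W : Set V} :
    ∀ {x y : V} (p : G.Walk x y), (∀ z ∈ p.support, z ∈ W) → ∀ (hx : x ∈ W) (hy : y ∈ W),
    (G.induce W).Reachable ⟨x, hx⟩ ⟨y, hy⟩ := by
  intro x y p
  induction p with
  | nil => intro _ hx hy; exact SimpleGraph.Reachable.refl _
  | @cons u m y' h q ih =>
    intro hp hx hy
    have hm : m ∈ W := hp m (by
      rw [SimpleGraph.Walk.support_cons]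
      exact List.mem_cons_of_mem _ q.start_mem_support)
    have hadj : (G.induce W).Adj ⟨u, hx⟩ ⟨m, hm⟩ := h
    exact hadj.reachable.trans
      (ih (fun z hz => hp z (by rw [SimpleGraph.Walk.support_cons]; exact List.mem_cons_of_mem _ hz)) hm hy)

lemma connIn_of_mem_support {G : SimpleGraph V} {W : Set V} :
    ∀ {x y : V} (p : G.Walk x y), (∀ z ∈ p.support, z ∈ W) → ∀ {z : V}, z ∈ p.support →
    ConnIn G W x z := by
  intro x y p
  induction p with
  | nil =>
    intro hp z hz
    rw [SimpleGraph.Walk.support_nil, List.mem_singleton] at hz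
    subst hz
    exact ConnIn.refl (hp _ (by simp))
  | @cons u m y' h q ih =>
    intro hp z hz
    have hu : u ∈ W := hp u (by simp [SimpleGraph.Walk.support_cons])
    have hm : m ∈ W := hp m (by
      rw [SimpleGraph.Walk.support_cons]
      exact List.mem_cons_of_mem _ q.start_mem_support)
    rw [SimpleGraph.Walk.support_cons] at hz
    rcases List.mem_cons.mp hz with rfl | hz'
    · exact ConnIn.refl hu
    · exact (ConnIn.adjExtend (ConnIn.refl hu) h hm).trans
        (ih (fun w hw => hp w (by rw [SimpleGraph.Walk.support_cons]; exact List.mem_cons_of_mem _ hw)) hz')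

/-- `G` with all edges incident to `S` removed. -/
def gRestrict (G : SimpleGraph V) (S : Set V) : SimpleGraph V where
  Adj a b := G.Adj a b ∧ a ∉ S ∧ b ∉ S
  symm := ⟨fun a b ⟨h1, h2, h3⟩ => ⟨h1.symm, h3, h2⟩⟩
  loopless := ⟨fun a h => G.loopless.irrefl a h.1⟩

lemma connIn_gRestrict {G : SimpleGraph V} {S W : Set V} (hWS : ∀ z ∈ W, z ∉ S) :
    ∀ {x y : V} (p : G.Walk x y), (∀ z ∈ p.support, z ∈ W) → ConnIn (gRestrict G S) W x y := by
  intro x y p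
  induction p with
  | nil => intro hp; exact ConnIn.refl (hp _ (by simp))
  | @cons u m y' h q ih =>
    intro hp
    have hu : u ∈ W := hp u (by simp [SimpleGraph.Walk.support_cons])
    have hm : m ∈ W := hp m (by
      rw [SimpleGraph.Walk.support_cons]
      exact List.mem_cons_of_mem _ q.start_mem_support)
    have hadj : (gRestrict G S).Adj u m := ⟨h, hWS u hu, hWS m hm⟩
    exact (ConnIn.adjExtend (ConnIn.refl hu) hadj hm).trans
      (ih (fun z hz => hp z (by rw [SimpleGraph.Walk.support_cons]; exact List.mem_cons_of_mem _ hz)))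

lemma ncard_biUnion_le {α β : Type} [Finite β] {K : Set α} (hK : K.Finite) (F : α → Set β)
    {m : ℕ} (h : ∀ u ∈ K, (F u).ncard ≤ m) : (⋃ u ∈ K, F u).ncard ≤ K.ncard * m := by
  revert h
  apply Set.Finite.induction_on K hK
    (motive := fun K _ => (∀ u ∈ K, (F u).ncard ≤ m) → (⋃ u ∈ K, F u).ncard ≤ K.ncard * m)
  · intro _; simp
  · intro a s ha hs ih h
    rw [Set.biUnion_insert, Set.ncard_insert_of_notMem ha hs]
    have h1 : (F a ∪ ⋃ u ∈ s, F u).ncard ≤ (F a).ncard + (⋃ u ∈ s, F u).ncard :=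
      Set.ncard_union_le _ _
    have h2 := ih (fun u hu => h u (Set.mem_insert_of_mem _ hu))
    have h3 := h a (Set.mem_insert _ _)
    calc (F a ∪ ⋃ u ∈ s, F u).ncard ≤ (F a).ncard + (⋃ u ∈ s, F u).ncard := h1
      _ ≤ m + s.ncard * m := Nat.add_le_add h3 h2
      _ = (s.ncard + 1) * m := by ring

theorem key [Finite V] : ∀ (c : ℕ) (G : SimpleGraph V) (v : V) (A : Set (Set V)),
    (∀ S ∈ A, v ∈ S ∧ (G.induce S).Connected ∧ (cutSet G S).ncard ≤ c) →
    ∃ B ⊆ A, B.ncard ≤ (c + 1).factorial ∧ ∀ T ∈ A, T ⊆ ⋃₀ B := by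
  intro c
  induction c with
  | zero =>
    intro G v A hA
    rcases A.eq_empty_or_nonempty with rfl | ⟨S, hSA⟩
    · exact ⟨∅, Set.empty_subset _, by simp, by simp⟩
    obtain ⟨hvS, hScon, hScut⟩ := hA S hSA
    have hcutS : cutSet G S = ∅ :=
      (Set.ncard_eq_zero (Set.toFinite _)).mp (le_antisymm hScut (Nat.zero_le _))
    refine ⟨{S}, Set.singleton_subset_iff.mpr hSA, by simp, ?_⟩
    intro T hTA
    rw [Set.sUnion_singleton]
    intro x hxT
    by_contra hxS
    obtain ⟨hvT, hTcon, _⟩ := hA T hTA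
    obtain ⟨p, hp⟩ := connIn_of_induce_connected hTcon hvT hxT
    obtain ⟨a, b, _, hab, _, haZ, _, hbZ⟩ :=
      exists_adj_boundary p hp (show v ∉ (Sᶜ : Set V) by simpa using hvS) (by simpa using hxS)
    have : b ∈ cutSet G S := ⟨by simpa using hbZ, a, not_not.mp (by simpa using haZ), hab⟩
    rw [hcutS] at this
    exact this
  | succ c ih =>
    intro G v A hA
    rcases A.eq_empty_or_nonempty with rfl | hne
    · exact ⟨∅, Set.empty_subset _, by simp, by simp⟩
    obtain ⟨S, hSA, hSmax⟩ := Set.Finite.exists_maximalFor id A (Set.toFinite A) hne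
    obtain ⟨hvS, hScon, hScut⟩ := hA S hSA
    have hcutT : ∀ T ∈ A, ∀ u, u ∈ T → u ∉ S → (cutSet G T \ S).ncard ≤ c := by
      intro T hTA u huT huS
      obtain ⟨hvT, hTcon, hTcut⟩ := hA T hTA
      have hST : ¬ S ⊆ T := by
        intro hsub
        have := hSmax hTA hsub
        exact huS (this huT)
      obtain ⟨w, hwS, hwT⟩ := Set.not_subset.mp hST
      obtain ⟨p, hp⟩ := connIn_of_induce_connected hScon hvS hwS
      obtain ⟨a, b, _, hab, haW, haZ, hbW, hbZ⟩ :=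
        exists_adj_boundary p hp (show v ∉ (Tᶜ : Set V) by simpa using hvT) (by simpa using hwT)
      have hbcut : b ∈ cutSet G T := ⟨by simpa using hbZ, a, not_not.mp (by simpa using haZ), hab⟩
      have hsub : cutSet G T \ S ⊆ cutSet G T \ {b} := by
        rintro z ⟨hz1, hz2⟩
        exact ⟨hz1, fun h => hz2 ((Set.mem_singleton_iff.mp h) ▸ hbW)⟩
      calc (cutSet G T \ S).ncard ≤ (cutSet G T \ {b}).ncard :=
            Set.ncard_le_ncard hsub (Set.toFinite _)
        _ = (cutSet G T).ncard - 1 := Set.ncard_diff_singleton_of_mem hbcut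
        _ ≤ (c + 1) - 1 := Nat.sub_le_sub_right hTcut 1
        _ = c := rfl
    set G' := gRestrict G S with hG'def
    set Cset : V → Set V → Set V := fun u T => {y | ConnIn G (T \ S) u y} with hCset
    set famB : V → Set (Set V) := fun u => {C | ∃ T, T ∈ A ∧ u ∈ T ∧ C = Cset u T} with hfamB
    have hfam : ∀ u ∈ cutSet G S, ∀ C ∈ famB u,
        u ∈ C ∧ (G'.induce C).Connected ∧ (cutSet G' C).ncard ≤ c := by
      intro u hu C hC
      obtain ⟨T, hTA, huT, rfl⟩ := hC
      have huS : u ∉ S := hu.1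
      have huC : u ∈ Cset u T := ConnIn.refl ⟨huT, huS⟩
      have hCsub : Cset u T ⊆ T \ S := fun y hy => ConnIn.mem_right hy
      have hconn : ∀ y ∈ Cset u T, ConnIn G' (Cset u T) u y := by
        intro y hy
        obtain ⟨p, hp⟩ := hy
        have hsupC : ∀ z ∈ p.support, z ∈ Cset u T :=
          fun z hz => connIn_of_mem_support p hp hz
        exact connIn_gRestrict (fun z hz => (hCsub hz).2) p hsupC
      have hCconn : (G'.induce (Cset u T)).Connected := by
        rw [SimpleGraph.connected_iff]
        constructor
        · rintro ⟨a, ha⟩ ⟨b, hb⟩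
          obtain ⟨p, hp⟩ := hconn a ha
          obtain ⟨q, hq⟩ := hconn b hb
          exact (reachable_induce_of_support p hp huC ha).symm.trans
            (reachable_induce_of_support q hq huC hb)
        · exact ⟨⟨u, huC⟩⟩
      have hcsub : cutSet G' (Cset u T) ⊆ cutSet G T \ S := by
        rintro w ⟨hwC, y, hyC, hyw⟩
        obtain ⟨hadj, hyS, hwS⟩ := hyw
        have hyT : y ∈ T \ S := hCsub hyC
        have hwT : w ∉ T := by
          intro hwT
          exact hwC (ConnIn.adjExtend hyC hadj ⟨hwT, hwS⟩)
        exact ⟨⟨hwT, y, hyT.1, hadj⟩, hwS⟩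
      exact ⟨huC, hCconn,
        le_trans (Set.ncard_le_ncard hcsub (Set.toFinite _)) (hcutT T hTA u huT huS)⟩
    have hIH : ∀ u, ∃ B', u ∈ cutSet G S →
        (B' ⊆ famB u ∧ B'.ncard ≤ (c + 1).factorial ∧ ∀ C ∈ famB u, C ⊆ ⋃₀ B') := by
      intro u
      by_cases hu : u ∈ cutSet G S
      · obtain ⟨B', h1, h2, h3⟩ := ih G' u (famB u) (fun C hC => hfam u hu C hC)
        exact ⟨B', fun _ => ⟨h1, h2, h3⟩⟩
      · exact ⟨∅, fun h => absurd h hu⟩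
    choose Bu hBu using hIH
    have hpre : ∀ u C, ∃ T, u ∈ cutSet G S → C ∈ Bu u → (T ∈ A ∧ C ⊆ T) := by
      intro u C
      by_cases h : u ∈ cutSet G S ∧ C ∈ Bu u
      · obtain ⟨T, hTA, huT, hCeq⟩ := (hBu u h.1).1 h.2
        refine ⟨T, fun _ _ => ⟨hTA, ?_⟩⟩
        rw [hCeq]
        exact fun y hy => (ConnIn.mem_right hy).1
      · exact ⟨S, fun h1 h2 => absurd ⟨h1, h2⟩ h⟩
    choose g hg using hpre
    refine ⟨insert S (⋃ u ∈ cutSet G S, g u '' Bu u), ?_, ?_, ?_⟩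
    · rintro B' hB'
      rcases hB' with rfl | hB'
      · exact hSA
      · simp only [Set.mem_iUnion] at hB'
        obtain ⟨u, hu, hB'⟩ := hB'
        obtain ⟨C, hC, rfl⟩ := hB'
        exact (hg u C hu hC).1
    · have h1 : (⋃ u ∈ cutSet G S, g u '' Bu u).ncard ≤ (cutSet G S).ncard * (c + 1).factorial := by
        apply ncard_biUnion_le (Set.toFinite _)
        intro u hu
        exact le_trans (Set.ncard_image_le (Set.toFinite _)) (hBu u hu).2.1
      have h2 : (insert S (⋃ u ∈ cutSet G S, g u '' Bu u)).ncard ≤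
          (⋃ u ∈ cutSet G S, g u '' Bu u).ncard + 1 := Set.ncard_insert_le _ _
      have h3 : (cutSet G S).ncard * (c + 1).factorial ≤ (c + 1) * (c + 1).factorial :=
        Nat.mul_le_mul_right _ hScut
      have h5 : 1 ≤ (c + 1).factorial := Nat.factorial_pos _
      have h6 : (c + 1 + 1).factorial = (c + 1) * (c + 1).factorial + (c + 1).factorial := by
        rw [Nat.factorial_succ]
        ring
      calc (insert S (⋃ u ∈ cutSet G S, g u '' Bu u)).ncard
          ≤ (⋃ u ∈ cutSet G S, g u '' Bu u).ncard + 1 := h2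
        _ ≤ (c + 1) * (c + 1).factorial + 1 := Nat.add_le_add (le_trans h1 h3) le_rfl
        _ ≤ (c + 1) * (c + 1).factorial + (c + 1).factorial := Nat.add_le_add_left h5 _
        _ = (c + 1 + 1).factorial := h6.symm
    · intro T hTA x hxT
      by_cases hxS : x ∈ S
      · exact ⟨S, Set.mem_insert _ _, hxS⟩
      obtain ⟨hvT, hTcon, _⟩ := hA T hTA
      obtain ⟨p, hp⟩ := (connIn_of_induce_connected hTcon hvT hxT).symm
      obtain ⟨a, b, hxa, hab, haW, haS, hbW, hbS⟩ := exists_adj_boundary p hp hxS hvS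
      have haK : a ∈ cutSet G S := ⟨haS, b, hbS, hab.symm⟩
      have hC : Cset a T ∈ famB a := ⟨T, hTA, haW, rfl⟩
      have hxC : x ∈ Cset a T := hxa.symm
      obtain ⟨C', hC', hxC'⟩ := Set.mem_sUnion.mp (((hBu a haK).2.2 _ hC) hxC)
      exact ⟨g a C', Set.mem_insert_of_mem _ (Set.mem_biUnion haK (Set.mem_image_of_mem _ hC')),
        (hg a C' haK hC').2 hxC'⟩

end IsolatedCover

/-- Lemma 8 of the paper: small cover of isolated neighborhoods. If `A`
is a family of neighborhoods of a vertex `v` (sets containing `v` that induce connected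
subgraphs), each of cut-size at most `c`, then `A` has a cover `B ⊆ A` of size at most
`(c+1)!`, i.e. every member of `A` is contained in the union of the members of `B`. -/
theorem small_cover_of_isolated_neighborhoods {V : Type} [Fintype V]
    (G : SimpleGraph V) (v : V) (c : ℕ) (A : Set (Set V))
    (hA : ∀ S ∈ A, v ∈ S ∧ (G.induce S).Connected ∧ (cutSet G S).ncard ≤ c) :
    ∃ B ⊆ A, B.ncard ≤ (c + 1).factorial ∧ ∀ T ∈ A, T ⊆ ⋃₀ B := by
  exact IsolatedCover.key c G v A hA
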